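/- Let θ be an algebraic integer with minimal polynomial f(x) = x^n + a_{n−1}x^{n−1} + ⋯ + a₁x + a₀ over ℚ, where n ≥ 2, and let K = ℚ(θ) with ring of integers O_K. If a prime p divides a_i for all i = 0, 1, …, n−1, then p does not divide the index [O_K : ℤ[θ]] if and only if p² does not divide a₀. -/
import Mathlib

open Polynomial

lemma aux_deg_lt (n : ℕ) (b : ℕ → ℤ) :
    (∑ i ∈ Finset.range n, C (b i) * X ^ i).degree < (n : WithBot ℕ) := by
  rw [← Fin.sum_univ_eq_sum_range (fun i => C (b i) * X ^ i) n]
  exact degree_sum_fin_lt _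

lemma aux_monic (n : ℕ) (b : ℕ → ℤ) :
    (X ^ n + ∑ i ∈ Finset.range n, C (b i) * X ^ i).Monic :=
  monic_X_pow_add (aux_deg_lt n b)

lemma aux_natDegree (n : ℕ) (b : ℕ → ℤ) :
    (X ^ n + ∑ i ∈ Finset.range n, C (b i) * X ^ i).natDegree = n := by
  have h1 : (∑ i ∈ Finset.range n, C (b i) * X ^ i).degree < (X ^ n : ℤ[X]).degree := by
    rw [degree_X_pow]; exact aux_deg_lt n b
  have := degree_add_eq_left_of_degree_lt h1
  rw [degree_X_pow] at this
  exact natDegree_eq_of_degree_eq_some this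

lemma aux_coeff (n : ℕ) (b : ℕ → ℤ) (i : ℕ) (hi : i < n) :
    (X ^ n + ∑ j ∈ Finset.range n, C (b j) * X ^ j).coeff i = b i := by
  rw [coeff_add, coeff_X_pow, if_neg hi.ne, zero_add, finset_sum_coeff]
  rw [Finset.sum_eq_single i (fun j _ hj => by simp [coeff_C_mul, coeff_X_pow, Ne.symm hj])
    (fun h => absurd (Finset.mem_range.2 hi) h)]
  simp

lemma aux_memiff (K : Type*) [Field K] [NumberField K] (θ z : NumberField.RingOfIntegers K) :
    z ∈ Algebra.adjoin ℤ {θ} ↔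
      (algebraMap (NumberField.RingOfIntegers K) K z) ∈ Algebra.adjoin ℤ {(θ : K)} := by
  have h : Algebra.adjoin ℤ {(θ : K)} =
      (Algebra.adjoin ℤ {θ}).map (IsScalarTower.toAlgHom ℤ (NumberField.RingOfIntegers K) K) := by
    rw [AlgHom.map_adjoin, Set.image_singleton]
    rfl
  rw [h]
  constructor
  · intro hz; exact ⟨z, hz, rfl⟩
  · rintro ⟨w, hw, hwz⟩
    have : w = z := IsFractionRing.injective (NumberField.RingOfIntegers K) K hwz
    rwa [← this]

lemma aux_finite (K : Type*) [Field K] [NumberField K] (θ : NumberField.RingOfIntegers K)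
    (hgen : Algebra.adjoin ℚ {(θ : K)} = ⊤) :
    Finite ((NumberField.RingOfIntegers K) ⧸ (Algebra.adjoin ℤ {θ}).toSubring.toAddSubgroup) := by
  have hFG : AddGroup.FG (NumberField.RingOfIntegers K) :=
    Module.Finite.iff_addGroup_fg.mp inferInstance
  have hfgq : AddGroup.FG
      ((NumberField.RingOfIntegers K) ⧸ (Algebra.adjoin ℤ {θ}).toSubring.toAddSubgroup) :=
    AddGroup.fg_of_surjective (QuotientAddGroup.mk'_surjective _)
  apply AddCommGroup.finite_of_fg_torsion
  intro q
  obtain ⟨z, rfl⟩ := QuotientAddGroup.mk'_surjective _ q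
  have hzK : (algebraMap (NumberField.RingOfIntegers K) K z) ∈ Algebra.adjoin ℚ {(θ : K)} := by
    rw [hgen]; trivial
  rw [Algebra.adjoin_singleton_eq_range_aeval] at hzK
  obtain ⟨q', hq'⟩ := hzK
  obtain ⟨b, hb⟩ := IsLocalization.integerNormalization_map_to_map (nonZeroDivisors ℤ) q'
  set Q : ℤ[X] := IsLocalization.integerNormalization (nonZeroDivisors ℤ) q' with hQ
  have h1 : (aeval (algebraMap (NumberField.RingOfIntegers K) K θ)) Q
      = (b : ℤ) • (algebraMap (NumberField.RingOfIntegers K) K z) := by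
    rw [← hq', ← Polynomial.aeval_map_algebraMap ℚ, hb, map_zsmul]
    rfl
  have h2 : (b : ℤ) • z = aeval θ Q := by
    apply IsFractionRing.injective (NumberField.RingOfIntegers K) K
    rw [map_zsmul, ← h1, aeval_algebraMap_apply]
  have hmem : (b : ℤ) • z ∈ (Algebra.adjoin ℤ {θ}).toSubring.toAddSubgroup := by
    show (b : ℤ) • z ∈ Algebra.adjoin ℤ {θ}
    rw [h2, Algebra.adjoin_singleton_eq_range_aeval]
    exact ⟨Q, rfl⟩
  rw [isOfFinAddOrder_iff_nsmul_eq_zero]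
  refine ⟨(b : ℤ).natAbs, Int.natAbs_pos.mpr (nonZeroDivisors.coe_ne_zero b), ?_⟩
  have hq0 : ((b : ℤ)) • (QuotientAddGroup.mk' (Algebra.adjoin ℤ {θ}).toSubring.toAddSubgroup z) = 0 := by
    rw [← map_zsmul, QuotientAddGroup.mk'_apply, QuotientAddGroup.eq_zero_iff]
    exact hmem
  have h4 : ((b : ℤ).natAbs : ℤ) • (QuotientAddGroup.mk' (Algebra.adjoin ℤ {θ}).toSubring.toAddSubgroup z) = 0 := by
    rcases Int.natAbs_eq (b : ℤ) with h | h
    · rw [← h]; exact hq0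
    · rw [show ((b : ℤ).natAbs : ℤ) = -(b : ℤ) by omega, neg_smul, hq0, neg_zero]
  rwa [natCast_zsmul] at h4

lemma aux_forward (K : Type*) [Field K] [NumberField K]
    (θ : NumberField.RingOfIntegers K)
    (n : ℕ) (hn : 2 ≤ n) (a : ℕ → ℤ)
    (f : ℤ[X]) (hf : f = X ^ n + ∑ i ∈ Finset.range n, C (a i) * X ^ i)
    (hmin : minpoly ℤ θ = f)
    (hgen : Algebra.adjoin ℚ {(θ : K)} = ⊤)
    (p : ℕ) (hp : p.Prime) (hpa : ∀ i < n, (p : ℤ) ∣ a i)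
    (hfin : Finite ((NumberField.RingOfIntegers K) ⧸
      (Algebra.adjoin ℤ {θ}).toSubring.toAddSubgroup))
    (h2 : ¬ ((p : ℤ) ^ 2 ∣ a 0)) :
    ¬ p ∣ ((Algebra.adjoin ℤ {θ}).toSubring.toAddSubgroup.index) := by
  haveI : Fact p.Prime := ⟨hp⟩
  intro hdvd
  set H := (Algebra.adjoin ℤ {θ}).toSubring.toAddSubgroup with hH
  haveI : Fintype ((NumberField.RingOfIntegers K) ⧸ H) := Fintype.ofFinite _
  have hcard : p ∣ Fintype.card ((NumberField.RingOfIntegers K) ⧸ H) := by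
    rwa [← Nat.card_eq_fintype_card, ← AddSubgroup.index_eq_card]
  obtain ⟨x, hx⟩ := exists_prime_addOrderOf_dvd_card p hcard
  obtain ⟨z, rfl⟩ := QuotientAddGroup.mk'_surjective H x
  have hz1 : z ∉ Algebra.adjoin ℤ {θ} := by
    intro hz
    have : QuotientAddGroup.mk' H z = 0 := (QuotientAddGroup.eq_zero_iff z).2 hz
    rw [this, addOrderOf_zero] at hx
    exact hp.one_lt.ne' hx.symm
  have hz2 : p • z ∈ Algebra.adjoin ℤ {θ} := by
    have : QuotientAddGroup.mk' H (p • z) = 0 := by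
      rw [map_nsmul, ← hx]
      exact addOrderOf_nsmul_eq_zero _
    exact (QuotientAddGroup.eq_zero_iff _).1 this
  -- Eisenstein setup
  have hfm : f.Monic := hf ▸ aux_monic n a
  have hfdeg : f.natDegree = n := hf ▸ aux_natDegree n a
  have hminK : minpoly ℤ (θ : K) = f := by
    rw [show (θ : K) = algebraMap (NumberField.RingOfIntegers K) K θ from rfl,
      minpoly.algebraMap_eq (IsFractionRing.injective _ _) θ, hmin]
  have hpZ : Prime (p : ℤ) := Nat.prime_iff_prime_int.mp hp
  have hei : f.IsEisensteinAt (Submodule.span ℤ {(p : ℤ)}) := by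
    refine ⟨?_, ?_, ?_⟩
    · rw [hfm.leadingCoeff]
      rw [Ideal.submodule_span_eq, Ideal.mem_span_singleton]
      exact fun h => hpZ.not_dvd_one h
    · intro i hi
      rw [hfdeg] at hi
      rw [hf, aux_coeff n a i hi, Ideal.submodule_span_eq, Ideal.mem_span_singleton]
      exact hpa i hi
    · rw [hf, aux_coeff n a 0 (by omega), Ideal.submodule_span_eq, Ideal.span_singleton_pow,
        Ideal.mem_span_singleton]
      exact fun h => h2 (by exact_mod_cast h)
  -- power basis
  have htK : IsIntegral ℚ (θ : K) := IsIntegral.of_finite ℚ _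
  let B : PowerBasis ℚ K := (Algebra.adjoin.powerBasis htK).map
    ((Subalgebra.equivOfEq _ _ hgen).trans Subalgebra.topEquiv)
  have hBgen : B.gen = (θ : K) := by
    simp [B, PowerBasis.map_gen, Algebra.adjoin.powerBasis_gen]
  have hBint : IsIntegral ℤ B.gen := by
    rw [hBgen]
    exact IsIntegral.algebraMap (Algebra.IsIntegral.isIntegral θ)
  have hzint : IsIntegral ℤ (algebraMap (NumberField.RingOfIntegers K) K z) :=
    IsIntegral.algebraMap (Algebra.IsIntegral.isIntegral z)
  have hsmul : (p : ℤ) • (algebraMap (NumberField.RingOfIntegers K) K z)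
      ∈ Algebra.adjoin ℤ {B.gen} := by
    rw [hBgen, natCast_zsmul]
    have := (aux_memiff K θ (p • z)).1 hz2
    rwa [map_nsmul] at this
  have hei' : (minpoly ℤ B.gen).IsEisensteinAt (Submodule.span ℤ {(p : ℤ)}) := by
    rw [hBgen, hminK]; exact hei
  have hzmem := mem_adjoin_of_smul_prime_smul_of_minpoly_isEisensteinAt
    hpZ hBint hzint hsmul hei'
  rw [hBgen] at hzmem
  exact hz1 ((aux_memiff K θ z).2 hzmem)

lemma aux_backward (K : Type*) [Field K] [NumberField K]
    (θ : NumberField.RingOfIntegers K)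
    (n : ℕ) (hn : 2 ≤ n) (a : ℕ → ℤ)
    (f : ℤ[X]) (hf : f = X ^ n + ∑ i ∈ Finset.range n, C (a i) * X ^ i)
    (hmin : minpoly ℤ θ = f)
    (p : ℕ) (hp : p.Prime) (hpa : ∀ i < n, (p : ℤ) ∣ a i)
    (h2 : (p : ℤ) ^ 2 ∣ a 0) :
    p ∣ ((Algebra.adjoin ℤ {θ}).toSubring.toAddSubgroup.index) := by
  obtain ⟨k, rfl⟩ : ∃ k, n = k + 2 := ⟨n - 2, by omega⟩
  set n := k + 2 with hn2
  set t : K := algebraMap (NumberField.RingOfIntegers K) K θ with htdef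
  have htint : IsIntegral ℤ t := IsIntegral.algebraMap (Algebra.IsIntegral.isIntegral θ)
  have hfm : f.Monic := hf ▸ aux_monic n a
  have hfdeg : f.natDegree = n := hf ▸ aux_natDegree n a
  have hminK : minpoly ℤ t = f := by
    rw [htdef, minpoly.algebraMap_eq (IsFractionRing.injective _ _) θ, hmin]
  have haev : aeval t f = 0 := by rw [← hminK]; exact minpoly.aeval ℤ t
  -- the polynomial g with X * g + a 0 = f
  set g : ℤ[X] := X ^ (k + 1) + ∑ i ∈ Finset.range (k + 1), C (a (i + 1)) * X ^ i with hgdef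
  have hgm : g.Monic := aux_monic _ _
  have hgdeg : g.natDegree = k + 1 := aux_natDegree _ _
  have hXg : f = X * g + C (a 0) := by
    rw [hf, hgdef, Finset.sum_range_succ']
    rw [mul_comm X _, add_mul, Finset.sum_mul]
    simp only [mul_assoc, ← pow_succ, pow_zero, one_mul]
    ring
  set G : K := aeval t g with hGdef
  have htG : t * G = -((a 0 : ℤ) : K) := by
    have h9 := congrArg (aeval t) hXg
    rw [haev, map_add, map_mul, aeval_X, aeval_C] at h9
    rw [show ((algebraMap ℤ K) (a 0)) = ((a 0 : ℤ) : K) from by simp] at h9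
    rw [← hGdef] at h9
    exact eq_neg_of_add_eq_zero_left h9.symm
  have ht0 : t ≠ 0 := by
    intro h
    have hdX : f ∣ X := by
      rw [← hminK]
      exact minpoly.isIntegrallyClosed_dvd htint (by rw [aeval_X, h])
    have := Polynomial.natDegree_le_of_dvd hdX X_ne_zero
    rw [natDegree_X] at this
    omega
  have ha0 : a 0 ≠ 0 := by
    intro h0
    have hG0 : G = 0 := by
      have : t * G = 0 := by rw [htG, h0]; simp
      rcases mul_eq_zero.mp this with h | h
      · exact absurd h ht0
      · exact h
    have hdvd : f ∣ g := by
      rw [← hminK]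
      exact minpoly.isIntegrallyClosed_dvd htint (by rw [← hGdef, hG0])
    have := Polynomial.natDegree_le_of_dvd hdvd hgm.ne_zero
    omega
  -- the integer constants
  obtain ⟨d, hd⟩ := h2
  set c : ℤ := -((p : ℤ) * d) with hcdef
  set e : ℕ → ℤ := fun j => if j = 0 then d * c ^ k else -(a (n - j) / p) * c ^ (n - j - 1)
    with hedef
  set M : ℤ[X] := X ^ n + ∑ j ∈ Finset.range n, C (e j) * X ^ j with hMdef
  have hpK : ((p : ℕ) : K) ≠ 0 := Nat.cast_ne_zero.mpr hp.ne_zero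
  set zK : K := G / ((p : ℕ) : K) with hzKdef
  have hpz : ((p : ℕ) : K) * zK = G := by
    rw [hzKdef, mul_div_cancel₀ _ hpK]
  have hzt : zK * t = ((c : ℤ) : K) := by
    have h10 : ((p : ℕ) : K) * (zK * t) = ((p : ℕ) : K) * ((c : ℤ) : K) := by
      rw [show ((p:ℕ):K) * (zK * t) = (((p:ℕ):K) * zK) * t from by ring, hpz,
        mul_comm G t, htG, hcdef, hd]
      push_cast
      ring
    exact mul_left_cancel₀ hpK h10
  -- per-term integer identities
  have hIdent0 : a 0 * e 0 = c ^ n := by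
    simp only [hedef, if_pos rfl]
    rw [hd, show c ^ n = c ^ 2 * c ^ k from by rw [← pow_add]; congr 1; omega, hcdef]
    ring
  have hIdent : ∀ j ∈ Finset.range (k + 1), a 0 * e (j + 1) * c ^ (j + 1)
      = a (n - (j + 1)) * c ^ n := by
    intro j hj
    rw [Finset.mem_range] at hj
    have hlt : n - (j + 1) < n := by omega
    have hpd : (p : ℤ) * (a (n - (j + 1)) / p) = a (n - (j + 1)) :=
      Int.mul_ediv_cancel' (hpa _ hlt)
    simp only [hedef, if_neg (Nat.succ_ne_zero j)]
    have h11 : c ^ n = c ^ (n - (j + 1) - 1) * c ^ (j + 1) * c := by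
      rw [← pow_add, ← pow_succ]
      congr 1
      omega
    conv_rhs => rw [← hpd]
    rw [hd, h11, hcdef]
    ring
  -- the key computation
  have htz : ∀ j, j ≤ n → t ^ n * zK ^ j = ((c : ℤ) : K) ^ j * t ^ (n - j) := by
    intro j hj
    rw [show t ^ n = t ^ j * t ^ (n - j) from by rw [← pow_add]; congr 1; omega,
      show t ^ j * t ^ (n - j) * zK ^ j = (zK * t) ^ j * t ^ (n - j) from by
        rw [mul_pow]; ring,
      hzt]
  have hM : aeval zK M = zK ^ n + ∑ j ∈ Finset.range n, ((e j : ℤ) : K) * zK ^ j := by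
    rw [hMdef, map_add, map_pow, aeval_X, map_sum]
    congr 1
    refine Finset.sum_congr rfl fun j _ => ?_
    rw [map_mul, map_pow, aeval_X, aeval_C]
    simp
  have hfev : aeval t f = t ^ n + ∑ i ∈ Finset.range n, ((a i : ℤ) : K) * t ^ i := by
    rw [hf, map_add, map_pow, aeval_X, map_sum]
    congr 1
    refine Finset.sum_congr rfl fun i _ => ?_
    rw [map_mul, map_pow, aeval_X, aeval_C]
    simp
  have key : ((a 0 : ℤ) : K) * t ^ n * aeval zK M = ((c : ℤ) : K) ^ n * aeval t f := by
    rw [hM, hfev, mul_add, mul_add, Finset.mul_sum, Finset.mul_sum]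
    have hL : ∀ j ∈ Finset.range n, ((a 0 : ℤ) : K) * t ^ n * (((e j : ℤ) : K) * zK ^ j)
        = ((a 0 * e j * c ^ j : ℤ) : K) * t ^ (n - j) := by
      intro j hj
      rw [Finset.mem_range] at hj
      rw [show ((a 0:ℤ):K) * t ^ n * (((e j:ℤ):K) * zK ^ j)
          = ((a 0:ℤ):K) * ((e j:ℤ):K) * (t ^ n * zK ^ j) from by ring, htz j hj.le]
      push_cast
      ring
    rw [Finset.sum_congr rfl hL]
    have hT0 : ((a 0:ℤ):K) * t ^ n * zK ^ n = ((a 0 * c ^ n : ℤ) : K) := by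
      rw [mul_assoc, htz n le_rfl, Nat.sub_self, pow_zero, mul_one]
      push_cast
      ring
    rw [hT0]
    -- split the sums
    rw [show (n : ℕ) = (k+1) + 1 from rfl]
    rw [Finset.sum_range_succ' (fun j => ((a 0 * e j * c ^ j : ℤ) : K) * t ^ (n - j)) (k+1),
      Finset.sum_range_succ' (fun i => ((c:ℤ):K) ^ n * (((a i :ℤ):K) * t ^ i)) (k+1)]
    simp only [pow_zero, mul_one, Nat.sub_zero]
    have hS : ∀ j ∈ Finset.range (k + 1),
        ((a 0 * e (j+1) * c ^ (j+1) : ℤ) : K) * t ^ (n - (j+1))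
        = ((a (n - (j+1)) * c ^ n : ℤ) : K) * t ^ (n - (j+1)) := by
      intro j hj
      rw [hIdent j hj]
    rw [Finset.sum_congr rfl hS]
    have hRefl := Finset.sum_range_reflect
      (fun i => ((a (i + 1) * c ^ n : ℤ) : K) * t ^ (i + 1)) (k + 1)
    have hS2 : ∀ j ∈ Finset.range (k + 1),
        ((a (n - (j+1)) * c ^ n : ℤ) : K) * t ^ (n - (j+1))
        = ((a ((k + 1 - 1 - j) + 1) * c ^ n : ℤ) : K) * t ^ ((k + 1 - 1 - j) + 1) := by
      intro j hj
      rw [Finset.mem_range] at hj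
      have hidx : n - (j + 1) = (k + 1 - 1 - j) + 1 := by omega
      rw [hidx]
    rw [Finset.sum_congr rfl hS2, hRefl]
    have hcast : ((a 0 * e 0 : ℤ) : K) = ((c ^ n : ℤ) : K) := by rw [hIdent0]
    rw [hcast]
    have hrest : ∀ i ∈ Finset.range (k + 1),
        ((a (i + 1) * c ^ n : ℤ) : K) * t ^ (i + 1)
        = ((c:ℤ):K) ^ n * (((a (i+1) :ℤ):K) * t ^ (i+1)) := by
      intro i _
      push_cast
      ring
    rw [Finset.sum_congr rfl hrest]
    push_cast
    ring
  -- conclude aeval zK M = 0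
  have hMz : aeval zK M = 0 := by
    rw [haev, mul_zero] at key
    rcases mul_eq_zero.mp key with h | h
    · rcases mul_eq_zero.mp h with h' | h'
      · exact absurd h' (Int.cast_ne_zero.mpr ha0)
      · exact absurd h' (pow_ne_zero n ht0)
    · exact h
  have hzint : IsIntegral ℤ zK :=
    ⟨M, hMdef ▸ aux_monic n e, by rw [← Polynomial.aeval_def]; exact hMz⟩
  set z : NumberField.RingOfIntegers K := ⟨zK, hzint⟩ with hzdef
  have hzcoe : algebraMap (NumberField.RingOfIntegers K) K z = zK := rfl
  -- p • z ∈ ℤ[θ]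
  have hpzmem : p • z ∈ Algebra.adjoin ℤ {θ} := by
    rw [aux_memiff K θ]
    rw [map_nsmul, hzcoe]
    have hnsz : p • zK = G := by rw [nsmul_eq_mul, hpz]
    rw [hnsz, hGdef, Algebra.adjoin_singleton_eq_range_aeval]
    exact ⟨g, rfl⟩
  -- z ∉ ℤ[θ]
  have hznot : z ∉ Algebra.adjoin ℤ {θ} := by
    intro hzin
    have hzadj : zK ∈ Algebra.adjoin ℤ {(θ : K)} := by
      rw [← hzcoe]; exact (aux_memiff K θ z).1 hzin
    rw [Algebra.adjoin_singleton_eq_range_aeval] at hzadj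
    obtain ⟨Q, hQ⟩ := hzadj
    have hev : aeval t (g - C ((p : ℕ) : ℤ) * Q) = 0 := by
      rw [map_sub, map_mul, aeval_C, ← hGdef]
      have hQ' : aeval t Q = zK := hQ
      rw [hQ', show ((algebraMap ℤ K) ((p:ℕ):ℤ)) = ((p:ℕ):K) from by push_cast; simp, hpz,
        sub_self]
    have hdvd2 : f ∣ g - C ((p : ℕ) : ℤ) * Q := by
      rw [← hminK]
      exact minpoly.isIntegrallyClosed_dvd htint hev
    have h8 := Polynomial.map_dvd (Int.castRingHom (ZMod p)) hdvd2
    haveI : Fact p.Prime := ⟨hp⟩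
    have hfbar : f.map (Int.castRingHom (ZMod p)) = X ^ n := by
      rw [hf, Polynomial.map_add, Polynomial.map_pow, map_X, Polynomial.map_sum]
      have hz9 : ∀ i ∈ Finset.range n,
          (C (a i) * X ^ i).map (Int.castRingHom (ZMod p)) = 0 := by
        intro i hi
        rw [Finset.mem_range] at hi
        rw [Polynomial.map_mul, map_C]
        have : ((a i : ℤ) : ZMod p) = 0 := (ZMod.intCast_zmod_eq_zero_iff_dvd _ _).2 (hpa i hi)
        simp [Int.castRingHom, this]
      rw [Finset.sum_congr rfl hz9]
      simp
    have hgbar : g.map (Int.castRingHom (ZMod p)) = X ^ (k + 1) := by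
      rw [hgdef, Polynomial.map_add, Polynomial.map_pow, map_X, Polynomial.map_sum]
      have hz9 : ∀ i ∈ Finset.range (k+1),
          (C (a (i+1)) * X ^ i).map (Int.castRingHom (ZMod p)) = 0 := by
        intro i hi
        rw [Finset.mem_range] at hi
        rw [Polynomial.map_mul, map_C]
        have : ((a (i+1) : ℤ) : ZMod p) = 0 :=
          (ZMod.intCast_zmod_eq_zero_iff_dvd _ _).2 (hpa (i+1) (by omega))
        simp [Int.castRingHom, this]
      rw [Finset.sum_congr rfl hz9]
      simp
    have hCp : (C ((p : ℕ) : ℤ) * Q).map (Int.castRingHom (ZMod p)) = 0 := by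
      rw [Polynomial.map_mul, map_C]
      have : (((p : ℕ) : ℤ) : ZMod p) = 0 := by
        rw [Int.cast_natCast, ZMod.natCast_self]
      simp [Int.castRingHom, this]
    rw [Polynomial.map_sub, hfbar, hgbar, hCp, sub_zero] at h8
    have hXne : (X ^ (k + 1) : (ZMod p)[X]) ≠ 0 := pow_ne_zero _ X_ne_zero
    have hled := Polynomial.natDegree_le_of_dvd h8 hXne
    rw [natDegree_X_pow, natDegree_X_pow] at hled
    omega
  -- conclude p ∣ index
  set H := (Algebra.adjoin ℤ {θ}).toSubring.toAddSubgroup with hH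
  set q := QuotientAddGroup.mk' H z with hq
  have hq0 : q ≠ 0 := by
    rw [hq, Ne, QuotientAddGroup.mk'_apply, QuotientAddGroup.eq_zero_iff]
    exact hznot
  have hpq : p • q = 0 := by
    rw [hq, ← map_nsmul, QuotientAddGroup.mk'_apply, QuotientAddGroup.eq_zero_iff]
    exact hpzmem
  have horder : addOrderOf q = p := by
    rcases (Nat.dvd_prime hp).1 (addOrderOf_dvd_of_nsmul_eq_zero hpq) with h | h
    · exact absurd (AddMonoid.addOrderOf_eq_one_iff.1 h) hq0
    · exact h
  have hfin := addOrderOf_dvd_natCard q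
  rw [horder] at hfin
  rwa [AddSubgroup.index_eq_card]

theorem stmt_12 (K : Type*) [Field K] [NumberField K]
    (θ : NumberField.RingOfIntegers K)
    (n : ℕ) (hn : 2 ≤ n) (a : ℕ → ℤ)
    (f : ℤ[X]) (hf : f = X ^ n + ∑ i ∈ Finset.range n, C (a i) * X ^ i)
    (hmin : minpoly ℤ θ = f)
    (hgen : Algebra.adjoin ℚ {(θ : K)} = ⊤)
    (p : ℕ) (hp : p.Prime) (hpa : ∀ i < n, (p : ℤ) ∣ a i) :
    ¬ p ∣ ((Algebra.adjoin ℤ {θ}).toSubring.toAddSubgroup.index) ↔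
      ¬ ((p : ℤ) ^ 2 ∣ a 0) := by
  constructor
  · intro hnd hsq
    exact hnd (aux_backward K θ n hn a f hf hmin p hp hpa hsq)
  · intro hsq
    exact aux_forward K θ n hn a f hf hmin hgen p hp hpa (aux_finite K θ hgen) hsq
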